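/- Let Ũ : (0,∞) → ℝ be nonincreasing and convex, bounded below by a constant, and satisfying Ũ(y) ≤ C(1 + y^q) for all y > 0 for some C > 0 and q < 0. Fix τ > 0 and define v(y) = (2√(πτ))^{-1} ∫_{-∞}^{∞} e^{-x²/(4τ)} Ũ(y e^{x−τ}) dx for y > 0. Then lim_{y→0⁺} v(y) = lim_{y→0⁺} Ũ(y), where both limits are taken in the extended reals (−∞, +∞] (they exist by monotonicity). -/

import Mathlib

open Real Set Filter MeasureTheory

lemma gauss_integrable' {τ : ℝ} (hτ : 0 < τ) (a : ℝ) :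
    Integrable (fun x : ℝ => Real.exp (-(x - a) ^ 2 / (4 * τ))) := by
  have h : Integrable (fun x : ℝ => Real.exp (-((4*τ)⁻¹) * x ^ 2)) :=
    integrable_exp_neg_mul_sq (by positivity)
  have h2 := h.comp_sub_right a
  have e : (fun x : ℝ => Real.exp (-(x - a) ^ 2 / (4 * τ)))
      = fun x : ℝ => Real.exp (-((4*τ)⁻¹) * (x - a) ^ 2) := by
    funext x; congr 1; field_simp
  rw [e]; exact h2

lemma gauss_integral0' {τ : ℝ} (hτ : 0 < τ) :
    ∫ x : ℝ, Real.exp (-x ^ 2 / (4 * τ)) = 2 * Real.sqrt (Real.pi * τ) := by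
  have h := integral_gaussian ((4*τ)⁻¹)
  have e : ∀ x : ℝ, -((4*τ)⁻¹) * x ^ 2 = -x ^ 2 / (4*τ) := fun x => by
    rw [neg_mul, inv_mul_eq_div, neg_div]
  simp_rw [e] at h
  rw [h, show Real.pi / (4*τ)⁻¹ = Real.pi * (4*τ) by field_simp,
    show Real.pi * (4*τ) = 2^2 * (Real.pi * τ) by ring,
    Real.sqrt_mul (by positivity), Real.sqrt_sq (by norm_num)]

lemma gauss_integral' {τ : ℝ} (hτ : 0 < τ) (a : ℝ) :
    ∫ x : ℝ, Real.exp (-(x - a) ^ 2 / (4 * τ)) = 2 * Real.sqrt (Real.pi * τ) :=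
  (integral_sub_right_eq_self (fun y : ℝ => Real.exp (-y ^ 2 / (4 * τ))) a).trans
    (gauss_integral0' hτ)

lemma exp_shift' {τ : ℝ} (hτ : 0 < τ) (c x : ℝ) :
    Real.exp (-x ^ 2 / (4 * τ)) * Real.exp (c * (x - τ))
      = Real.exp (c^2*τ - c*τ) * Real.exp (-(x - 2*c*τ) ^ 2 / (4 * τ)) := by
  rw [← Real.exp_add, ← Real.exp_add]
  congr 1
  field_simp
  ring

lemma support_line' {Ut : ℝ → ℝ} (hconv : ConvexOn ℝ (Ioi 0) Ut) {y : ℝ} (hy : 0 < y) :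
    ∃ k : ℝ, ∀ z > (0:ℝ), Ut y + k * (z - y) ≤ Ut z := by
  set s : ℝ → ℝ := fun z => (Ut z - Ut y) / (z - y) with hs
  have hy2 : (0:ℝ) < y/2 := by linarith
  have hbdd : BddBelow (s '' Ioi y) := by
    refine ⟨s (y/2), ?_⟩
    rintro _ ⟨w, hw, rfl⟩
    exact hconv.secant_mono (mem_Ioi.2 hy) (mem_Ioi.2 hy2)
      (mem_Ioi.2 (lt_trans hy hw)) (by intro h; rw [h] at hy2; linarith)
      (ne_of_gt hw) (by linarith [mem_Ioi.1 hw])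
  have hne : (s '' Ioi y).Nonempty := ⟨s (y+1), ⟨y+1, by simp [mem_Ioi], rfl⟩⟩
  refine ⟨sInf (s '' Ioi y), fun z hz => ?_⟩
  rcases lt_trichotomy z y with h | h | h
  · have hle : s z ≤ sInf (s '' Ioi y) := by
      refine le_csInf hne ?_
      rintro _ ⟨w, hw, rfl⟩
      exact hconv.secant_mono (mem_Ioi.2 hy) (mem_Ioi.2 hz)
        (mem_Ioi.2 (lt_trans hy hw)) (ne_of_lt h) (ne_of_gt hw) (by linarith [mem_Ioi.1 hw])
    have hzy : z - y < 0 := by linarith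
    have := mul_le_mul_of_nonpos_right hle hzy.le
    rw [hs] at this
    rw [div_mul_cancel₀ _ (by linarith : z - y ≠ 0)] at this
    linarith
  · subst h; simp
  · have hle : sInf (s '' Ioi y) ≤ s z := csInf_le hbdd ⟨z, mem_Ioi.2 h, rfl⟩
    have hzy : (0:ℝ) < z - y := by linarith
    have := mul_le_mul_of_nonneg_right hle hzy.le
    rw [hs, div_mul_cancel₀ _ (by linarith : z - y ≠ 0)] at this
    linarith

lemma main_integrable' (Ut : ℝ → ℝ) (C q M τ : ℝ) (hC : 0 < C) (hq : q < 0) (hτ : 0 < τ)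
    (hcont : ContinuousOn Ut (Ioi 0))
    (hbdd : ∀ y > (0:ℝ), M ≤ Ut y) (hgrowth : ∀ y > (0:ℝ), Ut y ≤ C * (1 + y ^ q))
    {y : ℝ} (hy : 0 < y) :
    Integrable (fun x : ℝ => Real.exp (-x ^ 2 / (4 * τ)) * Ut (y * Real.exp (x - τ))) := by
  have hpos : ∀ x : ℝ, 0 < y * Real.exp (x - τ) := fun x => by positivity
  have cont : Continuous (fun x : ℝ => Ut (y * Real.exp (x - τ))) :=
    hcont.comp_continuous (by continuity) (fun x => mem_Ioi.2 (hpos x))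
  have contf : Continuous (fun x : ℝ => Real.exp (-x ^ 2 / (4 * τ)) * Ut (y * Real.exp (x - τ))) :=
    (by continuity : Continuous fun x : ℝ => Real.exp (-x^2/(4*τ))).mul cont
  refine Integrable.mono'
    (g := fun x : ℝ => (|M| + C) * Real.exp (-(x - 0) ^ 2 / (4 * τ))
        + (C * y ^ q * Real.exp (q^2*τ - q*τ)) * Real.exp (-(x - 2*q*τ) ^ 2 / (4 * τ)))
    (((gauss_integrable' hτ 0).const_mul _).add ((gauss_integrable' hτ (2*q*τ)).const_mul _))
    contf.aestronglyMeasurable (Eventually.of_forall fun x => ?_)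
  set z := y * Real.exp (x - τ) with hzdef
  have hz : 0 < z := hpos x
  have h1 : M ≤ Ut z := hbdd z hz
  have h2 : Ut z ≤ C * (1 + z ^ q) := hgrowth z hz
  have hzq : (0:ℝ) < z ^ q := rpow_pos_of_pos hz q
  have habs : |Ut z| ≤ |M| + C * (1 + z ^ q) := by
    rw [abs_le]; constructor
    · have := neg_abs_le M; nlinarith
    · have := abs_nonneg M; nlinarith
  have hE := exp_shift' hτ q x
  have hzq' : z ^ q = y ^ q * Real.exp (q * (x - τ)) := by
    rw [hzdef, Real.mul_rpow hy.le (Real.exp_pos _).le, ← Real.exp_mul, mul_comm (x - τ) q]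
  simp only [sub_zero]
  rw [Real.norm_eq_abs, abs_mul, abs_of_pos (Real.exp_pos _)]
  calc Real.exp (-x^2/(4*τ)) * |Ut z|
      ≤ Real.exp (-x^2/(4*τ)) * (|M| + C*(1+z^q)) :=
        mul_le_mul_of_nonneg_left habs (Real.exp_pos _).le
    _ = (|M| + C) * Real.exp (-x^2/(4*τ))
        + (C * y^q * Real.exp (q^2*τ - q*τ)) * Real.exp (-(x - 2*q*τ)^2/(4*τ)) := by
        rw [hzq']
        linear_combination (C * y ^ q) * hE

-- lower bound : Ut y ≤ v y
lemma Ut_le_v' (Ut : ℝ → ℝ) (C q M τ : ℝ) (hC : 0 < C) (hq : q < 0) (hτ : 0 < τ)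
    (hconv : ConvexOn ℝ (Ioi 0) Ut)
    (hbdd : ∀ y > (0:ℝ), M ≤ Ut y) (hgrowth : ∀ y > (0:ℝ), Ut y ≤ C * (1 + y ^ q))
    {y : ℝ} (hy : 0 < y) :
    Ut y ≤ (2 * Real.sqrt (Real.pi * τ))⁻¹ *
      ∫ x : ℝ, Real.exp (-x ^ 2 / (4 * τ)) * Ut (y * Real.exp (x - τ)) := by
  have hsq : (0:ℝ) < 2 * Real.sqrt (Real.pi * τ) := by
    have : (0:ℝ) < Real.sqrt (Real.pi * τ) := Real.sqrt_pos.2 (by positivity)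
    linarith
  obtain ⟨k, hk⟩ := support_line' hconv hy
  set ℓ : ℝ → ℝ := fun x => (Ut y - k*y) * Real.exp (-(x - 0) ^ 2 / (4 * τ))
      + (k*y) * Real.exp (-(x - 2*τ) ^ 2 / (4 * τ)) with hℓ
  have intℓ : Integrable ℓ :=
    ((gauss_integrable' hτ 0).const_mul _).add ((gauss_integrable' hτ (2*τ)).const_mul _)
  have hE1 : ∀ x : ℝ, Real.exp (-x ^ 2 / (4 * τ)) * Real.exp (x - τ)
      = Real.exp (-(x - 2*τ) ^ 2 / (4 * τ)) := by
    intro x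
    have := exp_shift' hτ 1 x
    simpa using this
  have hptwise : ∀ x : ℝ, ℓ x ≤ Real.exp (-x ^ 2 / (4 * τ)) * Ut (y * Real.exp (x - τ)) := by
    intro x
    have hzpos : 0 < y * Real.exp (x - τ) := by positivity
    have hsupp := hk _ hzpos
    have heq : ℓ x = Real.exp (-x ^ 2 / (4 * τ)) * (Ut y + k * (y * Real.exp (x - τ) - y)) := by
      rw [hℓ]
      simp only [sub_zero]
      linear_combination (-(k * y)) * hE1 x
    rw [heq]
    exact mul_le_mul_of_nonneg_left hsupp (Real.exp_pos _).le
  have hint := main_integrable' Ut C q M τ hC hq hτ (hconv.continuousOn isOpen_Ioi) hbdd hgrowth hy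
  have hle := integral_mono intℓ hint hptwise
  have hintℓ : ∫ x : ℝ, ℓ x = Ut y * (2 * Real.sqrt (Real.pi * τ)) := by
    rw [hℓ]
    rw [integral_add ((gauss_integrable' hτ 0).const_mul _) ((gauss_integrable' hτ (2*τ)).const_mul _),
      integral_const_mul, integral_const_mul, gauss_integral' hτ 0, gauss_integral' hτ (2*τ)]
    ring
  rw [hintℓ] at hle
  have := mul_le_mul_of_nonneg_left hle (inv_nonneg.2 hsq.le)
  have heq2 : (2 * Real.sqrt (Real.pi * τ))⁻¹ * (Ut y * (2 * Real.sqrt (Real.pi * τ))) = Ut y := by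
    field_simp
  rwa [heq2] at this

-- upper bound : v y ≤ B if Ut ≤ B on Ioi 0
lemma v_le_B' (Ut : ℝ → ℝ) (C q M τ : ℝ) (hC : 0 < C) (hq : q < 0) (hτ : 0 < τ)
    (hcont : ContinuousOn Ut (Ioi 0))
    (hbdd : ∀ y > (0:ℝ), M ≤ Ut y) (hgrowth : ∀ y > (0:ℝ), Ut y ≤ C * (1 + y ^ q))
    {B : ℝ} (hB : ∀ z > (0:ℝ), Ut z ≤ B) {y : ℝ} (hy : 0 < y) :
    (2 * Real.sqrt (Real.pi * τ))⁻¹ *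
      (∫ x : ℝ, Real.exp (-x ^ 2 / (4 * τ)) * Ut (y * Real.exp (x - τ))) ≤ B := by
  have hsq : (0:ℝ) < 2 * Real.sqrt (Real.pi * τ) := by
    have : (0:ℝ) < Real.sqrt (Real.pi * τ) := Real.sqrt_pos.2 (by positivity)
    linarith
  have hint := main_integrable' Ut C q M τ hC hq hτ hcont hbdd hgrowth hy
  have hle : (∫ x : ℝ, Real.exp (-x ^ 2 / (4 * τ)) * Ut (y * Real.exp (x - τ)))
      ≤ ∫ x : ℝ, B * Real.exp (-(x - 0) ^ 2 / (4 * τ)) := by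
    refine integral_mono hint ((gauss_integrable' hτ 0).const_mul _) fun x => ?_
    simp only [sub_zero]
    rw [mul_comm B]
    exact mul_le_mul_of_nonneg_left (hB _ (by positivity)) (Real.exp_pos _).le
  rw [integral_const_mul, gauss_integral' hτ 0] at hle
  have := mul_le_mul_of_nonneg_left hle (inv_nonneg.2 hsq.le)
  rw [mul_comm B, inv_mul_cancel_left₀ (ne_of_gt hsq)] at this
  exact this

/-- the Gaussian-smoothed dual value function
`v(y) = (2√(πτ))⁻¹ ∫ e^{-x²/(4τ)} Ũ(y e^{x-τ}) dx`
has the same limit as `Ũ` as `y → 0⁺`, in the extended reals. -/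
theorem stmt_2 (Ut : ℝ → ℝ) (C q M τ : ℝ) (hC : 0 < C) (hq : q < 0) (hτ : 0 < τ)
    (hmono : AntitoneOn Ut (Ioi 0))
    (hconv : ConvexOn ℝ (Ioi 0) Ut)
    (hbdd : ∀ y > (0 : ℝ), M ≤ Ut y)
    (hgrowth : ∀ y > (0 : ℝ), Ut y ≤ C * (1 + y ^ q)) :
    let v : ℝ → ℝ := fun y =>
      (2 * Real.sqrt (Real.pi * τ))⁻¹ *
        ∫ x : ℝ, Real.exp (-x ^ 2 / (4 * τ)) * Ut (y * Real.exp (x - τ))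
    ∃ L : EReal,
      Tendsto (fun y => (Ut y : EReal)) (nhdsWithin 0 (Ioi 0)) (nhds L) ∧
      Tendsto (fun y => (v y : EReal)) (nhdsWithin 0 (Ioi 0)) (nhds L) := by
  intro v
  set F : ℝ → EReal := fun y => (Ut y : EReal) with hF
  have hmonoE : AntitoneOn F (Ioi 0) := fun a ha b hb hab =>
    EReal.coe_le_coe_iff.2 (hmono ha hb hab)
  set L : EReal := sSup (F '' Ioi 0) with hL
  have h1 : Tendsto F (nhdsWithin 0 (Ioi 0)) (nhds L) :=
    hmonoE.tendsto_nhdsGT (OrderTop.bddAbove _)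
  have hLbot : L ≠ ⊥ := by
    have : (Ut 1 : EReal) ≤ L := le_sSup ⟨1, mem_Ioi.2 one_pos, rfl⟩
    intro h
    rw [h, le_bot_iff] at this
    exact EReal.coe_ne_bot _ this
  have hlow : ∀ y ∈ Ioi (0:ℝ), Ut y ≤ v y := fun y hy =>
    Ut_le_v' Ut C q M τ hC hq hτ hconv hbdd hgrowth (mem_Ioi.1 hy)
  refine ⟨L, h1, ?_⟩
  by_cases hLtop : L = ⊤
  · rw [hLtop] at h1 ⊢
    refine tendsto_nhds_top_mono h1 ?_
    filter_upwards [self_mem_nhdsWithin] with y hy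
    exact EReal.coe_le_coe_iff.2 (hlow y hy)
  · -- L is a real number B
    set B : ℝ := L.toReal with hB
    have hcoe : (B : EReal) = L := EReal.coe_toReal hLtop hLbot
    have hUB : ∀ z > (0:ℝ), Ut z ≤ B := by
      intro z hz
      have : (Ut z : EReal) ≤ L := le_sSup ⟨z, mem_Ioi.2 hz, rfl⟩
      rw [← hcoe] at this
      exact EReal.coe_le_coe_iff.1 this
    have hUtB : Tendsto Ut (nhdsWithin 0 (Ioi 0)) (nhds B) := by
      rw [← EReal.tendsto_coe (m := Ut) (a := B)]
      rw [hcoe]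
      exact h1
    have hvB : Tendsto v (nhdsWithin 0 (Ioi 0)) (nhds B) := by
      refine tendsto_of_tendsto_of_tendsto_of_le_of_le' hUtB tendsto_const_nhds ?_ ?_
      · filter_upwards [self_mem_nhdsWithin] with y hy
        exact hlow y hy
      · filter_upwards [self_mem_nhdsWithin] with y hy
        exact v_le_B' Ut C q M τ hC hq hτ (hconv.continuousOn isOpen_Ioi) hbdd hgrowth hUB
          (mem_Ioi.1 hy)
    rw [← hcoe]
    exact EReal.tendsto_coe.2 hvB
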